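/- Fix integers q ≥ 2 and n ≥ 1, the alphabet A = {0,1,…,q−1}, and a code C ⊆ A^n with #C ≥ 2 and minimum Hamming distance d. Then there exist a set of coordinates S ⊆ {1,…,n} with #S = n − d and values t : S → ℝ such that the set Λ_C ∩ { x ∈ ℝ^n : x_i = t_i for all i ∈ S } has strictly positive Hausdorff dimension. -/

import Mathlib

open Set Filter
set_option maxHeartbeats 2000000

section aux
variable {Q : ℝ}

lemma aux_summable (hQ : 1 < Q) {c : ℕ → ℝ} {M : ℝ} (hc : ∀ j, |c j| ≤ M) :
    Summable (fun j => c j / Q ^ (j + 1)) := by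
  have h0 : 0 < Q := lt_trans one_pos hQ
  refine Summable.of_norm_bounded (g := fun j => (M / Q) * (1 / Q) ^ j) ?_ ?_
  · exact (summable_geometric_of_lt_one (by positivity)
      (by rw [div_lt_one h0]; exact hQ)).mul_left _
  · intro j
    have h1 : (0:ℝ) < Q ^ (j+1) := by positivity
    rw [norm_div, Real.norm_eq_abs, Real.norm_eq_abs, abs_of_pos h1]
    calc |c j| / Q ^ (j+1) ≤ M / Q ^ (j+1) := by gcongr; exact hc j
      _ = M / Q * (1 / Q) ^ j := by
          rw [pow_succ', ← div_div, div_eq_mul_inv (M/Q), ← inv_pow, ← one_div]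

lemma aux_geom (hQ : 1 < Q) (M : ℝ) (m : ℕ) :
    HasSum (fun i : ℕ => M / Q ^ (i + m + 1)) (M / ((Q - 1) * Q ^ m)) := by
  have h0 : 0 < Q := lt_trans one_pos hQ
  have hQ0 : Q ≠ 0 := ne_of_gt h0
  have h1 : (0:ℝ) < Q - 1 := by linarith
  have h2 : (0:ℝ) ≤ 1 / Q := by positivity
  have h3 : 1 / Q < 1 := by rw [div_lt_one h0]; exact hQ
  have this := (hasSum_geometric_of_lt_one h2 h3).mul_left (M / Q ^ (m+1))
  have e1 : (fun i : ℕ => M / Q ^ (m+1) * (1 / Q) ^ i) = fun i : ℕ => M / Q ^ (i + m + 1) := by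
    funext i
    have hix : i + m + 1 = (m + 1) + i := by omega
    rw [hix]
    conv_rhs => rw [pow_add]
    rw [← div_div, div_eq_mul_inv (M / Q^(m+1)), ← inv_pow, ← one_div]
  have e2 : M / Q ^ (m+1) * (1 - 1 / Q)⁻¹ = M / ((Q - 1) * Q ^ m) := by
    have h5 : (1:ℝ) - 1/Q = (Q-1)/Q := by field_simp
    rw [h5, inv_div, div_mul_div_comm, div_eq_div_iff (by positivity) (by positivity)]
    ring
  rw [e1, e2] at this
  exact this

lemma aux_tsum_le (hQ : 1 < Q) {c : ℕ → ℝ} {M : ℝ} (hc : ∀ j, |c j| ≤ M) (m : ℕ) :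
    |∑' i : ℕ, c (i + m) / Q ^ (i + m + 1)| ≤ M / ((Q - 1) * Q ^ m) := by
  have hs : Summable (fun j => c j / Q ^ (j + 1)) := aux_summable hQ hc
  have hs2 : Summable (fun i : ℕ => c (i + m) / Q ^ (i + m + 1)) :=
    (summable_nat_add_iff m).2 hs
  calc |∑' i : ℕ, c (i + m) / Q ^ (i + m + 1)|
      ≤ ∑' i : ℕ, |c (i + m) / Q ^ (i + m + 1)| := by
        have habs : Summable (fun i : ℕ => ‖c (i + m) / Q ^ (i + m + 1)‖) := by
          simpa only [Real.norm_eq_abs] using hs2.abs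
        simpa only [Real.norm_eq_abs] using norm_tsum_le_tsum_norm habs
    _ ≤ ∑' i : ℕ, M / Q ^ (i + m + 1) := by
        refine Summable.tsum_le_tsum (fun i => ?_) hs2.abs (aux_geom hQ M m).summable
        have h1 : (0:ℝ) < Q ^ (i+m+1) := by positivity
        rw [abs_div, abs_of_pos h1]
        gcongr
        exact hc _
    _ = M / ((Q - 1) * Q ^ m) := (aux_geom hQ M m).tsum_eq

lemma aux_shift (hQ : 1 < Q) {c : ℕ → ℝ} {M : ℝ} (hc : ∀ j, |c j| ≤ M) {m : ℕ}
    (h0 : ∀ j < m, c j = 0) :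
    ∑' j : ℕ, c j / Q ^ (j + 1) = ∑' i : ℕ, c (i + m) / Q ^ (i + m + 1) := by
  have hs : Summable (fun j => c j / Q ^ (j + 1)) := aux_summable hQ hc
  rw [← Summable.sum_add_tsum_nat_add m hs, Finset.sum_eq_zero, zero_add]
  intro j hj
  rw [h0 j (Finset.mem_range.1 hj), zero_div]

end aux

noncomputable section bexp
open Classical in
/-- Greedy binary expansion remainders. -/
noncomputable def bexp (x : ℝ) : ℕ → ℝ
  | 0 => x
  | k+1 => if bexp x k < 1/2 then 2 * bexp x k else 2 * bexp x k - 1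

open Classical in
/-- Greedy binary digits. -/
noncomputable def bdig (x : ℝ) (k : ℕ) : Bool := if bexp x k < 1/2 then false else true

lemma bexp_mem {x : ℝ} (hx : x ∈ Set.Icc (0:ℝ) 1) (k : ℕ) : bexp x k ∈ Set.Icc (0:ℝ) 1 := by
  induction k with
  | zero => exact hx
  | succ k ih =>
    obtain ⟨h0, h1⟩ := ih
    rw [bexp]
    split
    · next h => constructor <;> [linarith; linarith]
    · next h => push_neg at h; constructor <;> [linarith; linarith]

lemma bexp_partial (x : ℝ) (m : ℕ) :
    ∑ j ∈ Finset.range m, (bif bdig x j then (1:ℝ) else 0) / 2 ^ (j + 1)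
      = x - bexp x m / 2 ^ m := by
  induction m with
  | zero => simp [bexp]
  | succ m ih =>
    rw [Finset.sum_range_succ, ih, bdig, bexp]
    split
    · next h => simp only [Bool.cond_false]; ring
    · next h => simp only [Bool.cond_true]; rw [pow_succ]; ring

lemma binary_hasSum {x : ℝ} (hx : x ∈ Set.Icc (0:ℝ) 1) :
    HasSum (fun j : ℕ => (bif bdig x j then (1:ℝ) else 0) / 2 ^ (j + 1)) x := by
  rw [hasSum_iff_tendsto_nat_of_nonneg]
  · have h1 : Filter.Tendsto (fun m : ℕ => bexp x m / 2 ^ m) Filter.atTop (nhds 0) := by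
      refine squeeze_zero (g := fun m => (1/2:ℝ) ^ m)
        (fun m => div_nonneg (bexp_mem hx m).1 (by positivity)) (fun m => ?_) ?_
      · calc bexp x m / 2 ^ m ≤ 1 / 2 ^ m := by gcongr; exact (bexp_mem hx m).2
          _ = (1/2:ℝ) ^ m := by rw [div_pow, one_pow]
      · exact tendsto_pow_atTop_nhds_zero_of_lt_one (by norm_num) (by norm_num)
    have h2 : (fun m : ℕ => ∑ j ∈ Finset.range m,
        (bif bdig x j then (1:ℝ) else 0) / 2 ^ (j + 1)) = fun m => x - bexp x m / 2 ^ m := by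
      funext m; exact bexp_partial x m
    rw [h2]
    simpa using (tendsto_const_nhds (x := x)).sub h1
  · intro i
    apply div_nonneg _ (by positivity)
    cases bdig x i <;> norm_num

end bexp


lemma binary_hasSum' {x : ℝ} (hx : x ∈ Set.Icc (0:ℝ) 1) :
    ∃ a : ℕ → Bool, HasSum (fun j : ℕ => (bif a j then (1:ℝ) else 0) / 2 ^ (j + 1)) x :=
  ⟨bdig x, binary_hasSum hx⟩

open scoped NNReal

/-- digit value -/
noncomputable def digF (q : ℕ) (u v : Fin q) : Bool → ℝ := fun b => ((bif b then v else u : Fin q) : ℝ)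

/-- Cantor-type map with two `q`-ary digits `u, v`. -/
noncomputable def Fc (q : ℕ) (u v : Fin q) (a : ℕ → Bool) : ℝ :=
  ∑' j : ℕ, digF q u v (a j) / (q : ℝ) ^ (j + 1)

/-- binary expansion map -/
noncomputable def Gc (a : ℕ → Bool) : ℝ := ∑' j : ℕ, (bif a j then (1:ℝ) else 0) / 2 ^ (j + 1)

lemma Gc_surj : Set.Icc (0:ℝ) 1 ⊆ Set.range Gc := by
  intro x hx
  obtain ⟨a, ha⟩ := binary_hasSum' hx
  exact ⟨a, ha.tsum_eq⟩

lemma Gdig_bound (a : ℕ → Bool) (j : ℕ) : |(bif a j then (1:ℝ) else 0)| ≤ 1 := by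
  cases a j <;> norm_num

lemma Gc_summable (a : ℕ → Bool) :
    Summable (fun j => (bif a j then (1:ℝ) else 0) / 2 ^ (j + 1)) :=
  aux_summable (by norm_num) (Gdig_bound a)

lemma Gc_diff_le {a b : ℕ → Bool} {m : ℕ} (h : ∀ j < m, a j = b j) :
    |Gc a - Gc b| ≤ 1 / 2 ^ m := by
  have hsub : Gc a - Gc b = ∑' j : ℕ,
      ((bif a j then (1:ℝ) else 0) - (bif b j then (1:ℝ) else 0)) / 2 ^ (j + 1) := by
    rw [Gc, Gc, ← Summable.tsum_sub (Gc_summable a) (Gc_summable b)]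
    exact tsum_congr fun j => (sub_div _ _ _).symm
  have hbd : ∀ j, |(bif a j then (1:ℝ) else 0) - (bif b j then (1:ℝ) else 0)| ≤ 1 := by
    intro j; cases a j <;> cases b j <;> norm_num
  have hz : ∀ j < m, (bif a j then (1:ℝ) else 0) - (bif b j then (1:ℝ) else 0) = 0 := by
    intro j hj; rw [h j hj, sub_self]
  rw [hsub, aux_shift (by norm_num) hbd hz]
  have := aux_tsum_le (by norm_num : (1:ℝ) < 2) hbd m
  convert this using 2
  norm_num

lemma digF_bound (q : ℕ) (hq : 1 ≤ q) (u v : Fin q) (b : Bool) : |digF q u v b| ≤ (q : ℝ) := by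
  have h1 : ∀ w : Fin q, |((w : Fin q) : ℝ)| ≤ (q:ℝ) := by
    intro w
    rw [abs_of_nonneg (by positivity)]
    exact_mod_cast le_of_lt w.is_lt
  cases b <;> simpa [digF] using by first | exact h1 u | exact h1 v

lemma Fc_summable (q : ℕ) (hq : 2 ≤ q) (u v : Fin q) (a : ℕ → Bool) :
    Summable (fun j => digF q u v (a j) / (q : ℝ) ^ (j + 1)) :=
  aux_summable (by exact_mod_cast lt_of_lt_of_le one_lt_two hq)
    (fun j => digF_bound q (le_trans one_le_two hq) u v (a j))

lemma delta_ge_one {q : ℕ} {u v : Fin q} (huv : u ≠ v) : 1 ≤ |((v : Fin q) : ℝ) - ((u : Fin q) : ℝ)| := by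
  have hz : ((v.val : ℤ) - (u.val : ℤ)) ≠ 0 := by
    intro h
    apply huv
    have h3 : (u.val : ℤ) = v.val := by linarith
    exact Fin.ext (by exact_mod_cast h3)
  have h1 : (1 : ℤ) ≤ |(v.val : ℤ) - (u.val : ℤ)| := Int.one_le_abs hz
  have h2 : ((v : Fin q) : ℝ) - ((u : Fin q) : ℝ) = (((v.val : ℤ) - (u.val : ℤ) : ℤ) : ℝ) := by
    push_cast; ring
  rw [h2, ← Int.cast_abs]
  exact_mod_cast h1

lemma Fc_diff (q : ℕ) (hq3 : 3 ≤ q) (u v : Fin q) (huv : u ≠ v) {a b : ℕ → Bool} {m : ℕ}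
    (hag : ∀ j < m, a j = b j) (hne : a m ≠ b m) :
    ((q:ℝ) - 2) / (((q:ℝ) - 1) * (q:ℝ) ^ (m+1)) ≤ |Fc q u v a - Fc q u v b| := by
  set Q : ℝ := (q : ℝ) with hQdef
  have hQ3 : (3:ℝ) ≤ Q := by rw [hQdef]; exact_mod_cast hq3
  have hQ : 1 < Q := by linarith
  have hQ0 : (0:ℝ) < Q := by linarith
  set δ : ℝ := |((v : Fin q) : ℝ) - ((u : Fin q) : ℝ)| with hδdef
  have hδ1 : 1 ≤ δ := delta_ge_one huv
  set h : ℕ → ℝ := fun j => digF q u v (a j) - digF q u v (b j) with hhdef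
  have hbd : ∀ j, |h j| ≤ δ := by
    intro j
    simp only [hhdef, digF]
    cases a j <;> cases b j <;>
      simp [abs_sub_comm, hδdef] <;> linarith [abs_nonneg (((v : Fin q) : ℝ) - ((u : Fin q) : ℝ))]
  have hz : ∀ j < m, h j = 0 := by
    intro j hj; simp only [hhdef]; rw [hag j hj, sub_self]
  have hδm : |h m| = δ := by
    simp only [hhdef, digF]
    cases ham : a m <;> cases hbm : b m <;> first
      | (exact absurd (ham.trans hbm.symm) hne)
      | simp [abs_sub_comm, hδdef]
  have hsum : Summable (fun j => h j / Q ^ (j+1)) :=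
    aux_summable hQ (fun j => (hbd j).trans (le_trans (le_abs_self δ) (le_refl _)))
  have hdiff : Fc q u v a - Fc q u v b = ∑' j : ℕ, h j / Q ^ (j + 1) := by
    rw [Fc, Fc, ← Summable.tsum_sub (Fc_summable q (by omega) u v a) (Fc_summable q (by omega) u v b)]
    exact tsum_congr fun j => (sub_div _ _ _).symm
  have hdecomp : ∑' j : ℕ, h j / Q ^ (j + 1)
      = (∑ j ∈ Finset.range (m+1), h j / Q ^ (j+1)) + ∑' i : ℕ, h (i + (m+1)) / Q ^ (i + (m+1) + 1) := by
    rw [Summable.sum_add_tsum_nat_add (m+1) hsum]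
  have hrange : ∑ j ∈ Finset.range (m+1), h j / Q ^ (j+1) = h m / Q ^ (m+1) := by
    rw [Finset.sum_eq_single_of_mem m (Finset.self_mem_range_succ m)]
    intro j hj hjm
    rw [hz j (by rw [Finset.mem_range] at hj; omega), zero_div]
  have htail := aux_tsum_le hQ hbd (m+1)
  set T : ℝ := ∑' i : ℕ, h (i + (m+1)) / Q ^ (i + (m+1) + 1) with hTdef
  have hlow : δ / Q ^ (m+1) - δ / ((Q-1) * Q ^ (m+1)) ≤ |Fc q u v a - Fc q u v b| := by
    rw [hdiff, hdecomp, hrange]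
    have h1 : |h m / Q ^ (m+1)| - |T| ≤ |h m / Q ^ (m+1) + T| := by
      have := abs_add_le (h m / Q ^ (m+1) + T) (-T)
      simp only [add_neg_cancel_right, abs_neg] at this
      linarith
    have h2 : |h m / Q ^ (m+1)| = δ / Q ^ (m+1) := by
      rw [abs_div, hδm, abs_of_pos (by positivity)]
    linarith
  have hA0 : (0:ℝ) < Q ^ (m+1) := by positivity
  have hB0 : (0:ℝ) < Q - 1 := by linarith
  have hBA0 : (0:ℝ) < (Q - 1) * Q ^ (m+1) := mul_pos hB0 hA0
  have heq : δ / Q ^ (m+1) - δ / ((Q-1) * Q ^ (m+1)) = δ * (Q-2) / ((Q-1) * Q ^ (m+1)) := by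
    rw [div_sub_div _ _ (ne_of_gt hA0) (ne_of_gt hBA0),
      div_eq_div_iff (ne_of_gt (mul_pos hA0 hBA0)) (ne_of_gt hBA0)]
    ring
  have hfin : (Q - 2) / ((Q-1) * Q ^ (m+1)) ≤ δ * (Q-2) / ((Q-1) * Q ^ (m+1)) := by
    rw [div_le_div_iff_of_pos_right hBA0]
    nlinarith
  linarith [heq ▸ hlow]

open scoped ENNReal

lemma dimH_Icc01 : dimH (Set.Icc (0:ℝ) 1) = 1 := by
  have h : Set.Icc (0:ℝ) 1 ∈ nhds (1/2 : ℝ) :=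
    Icc_mem_nhds (by norm_num) (by norm_num)
  rw [Real.dimH_of_mem_nhds h]
  simp

lemma core (q : ℕ) (hq : 2 ≤ q) (u v : Fin q) (huv : u ≠ v) :
    0 < dimH (Set.range (Fc q u v)) := by
  rcases eq_or_lt_of_le hq with hq2 | hq3
  · -- q = 2
    have hq2' : q = 2 := hq2.symm
    subst hq2'
    have hGF : Set.range Gc ⊆ Set.range (Fc 2 u v) := by
      rintro x ⟨b, rfl⟩
      have huv2 : (u = 0 ∧ v = 1) ∨ (u = 1 ∧ v = 0) := by
        revert huv; revert u v; decide
      rcases huv2 with ⟨hu, hv⟩ | ⟨hu, hv⟩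
      · refine ⟨b, ?_⟩
        refine tsum_congr fun j => ?_
        subst hu hv
        cases hb : b j <;> norm_num [digF, hb]
      · refine ⟨fun j => !(b j), ?_⟩
        refine tsum_congr fun j => ?_
        subst hu hv
        cases hb : b j <;> norm_num [digF, hb]
    calc (0:ℝ≥0∞) < 1 := one_pos
      _ = dimH (Set.Icc (0:ℝ) 1) := dimH_Icc01.symm
      _ ≤ dimH (Set.range Gc) := dimH_mono Gc_surj
      _ ≤ dimH (Set.range (Fc 2 u v)) := dimH_mono hGF
  · -- 3 ≤ q
    have hq3' : 3 ≤ q := hq3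
    set Q : ℝ := (q : ℝ) with hQdef
    have hQ3 : (3:ℝ) ≤ Q := by rw [hQdef]; exact_mod_cast hq3'
    have hQ0 : (0:ℝ) < Q := by linarith
    have hQ1 : (1:ℝ) < Q := by linarith
    set s : ℝ := Real.log 2 / Real.log Q with hsdef
    have hlogQ : 0 < Real.log Q := Real.log_pos hQ1
    have hs0 : 0 < s := div_pos (Real.log_pos one_lt_two) hlogQ
    have hQs : Q ^ s = 2 := by
      rw [Real.rpow_def_of_pos hQ0, hsdef, mul_div_cancel₀ _ (ne_of_gt hlogQ),
        Real.exp_log two_pos]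
    set cQ : ℝ := (Q - 2) / ((Q - 1) * Q) with hcQdef
    have hcQ0 : 0 < cQ := by
      apply div_pos (by linarith) (by nlinarith)
    -- injectivity
    have hsep : ∀ a b : ℕ → Bool, a ≠ b → ∃ m : ℕ, (∀ j < m, a j = b j) ∧ a m ≠ b m := by
      intro a b hab
      have hex : ∃ j, a j ≠ b j := Function.ne_iff.1 hab
      exact ⟨Nat.find hex, fun j hj => not_not.1 (Nat.find_min hex hj), Nat.find_spec hex⟩
    have hkey : ∀ a b : ℕ → Bool,
        |Gc a - Gc b| ≤ (cQ ^ s)⁻¹ * |Fc q u v a - Fc q u v b| ^ s := by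
      intro a b
      by_cases hab : a = b
      · subst hab
        simp only [sub_self, abs_zero]
        positivity
      · obtain ⟨m, hag, hne⟩ := hsep a b hab
        have h1 : |Gc a - Gc b| ≤ 1 / 2 ^ m := Gc_diff_le hag
        have h2 := Fc_diff q hq3' u v huv hag hne
        have h3 : cQ / Q ^ m = (Q - 2) / ((Q - 1) * Q ^ (m+1)) := by
          rw [hcQdef, div_div, mul_assoc, mul_comm Q (Q ^ m), ← pow_succ]
        have h4 : cQ / Q ^ m ≤ |Fc q u v a - Fc q u v b| := by rw [h3]; exact h2
        have h5 : (cQ / Q ^ m) ^ s ≤ |Fc q u v a - Fc q u v b| ^ s :=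
          Real.rpow_le_rpow (by positivity) h4 hs0.le
        have h6 : (cQ / Q ^ m) ^ s = cQ ^ s / 2 ^ m := by
          rw [Real.div_rpow hcQ0.le (by positivity), ← Real.rpow_natCast Q m,
            ← Real.rpow_mul hQ0.le, mul_comm, Real.rpow_mul hQ0.le, hQs,
            Real.rpow_natCast]
        calc |Gc a - Gc b| ≤ 1 / 2 ^ m := h1
          _ = (cQ ^ s)⁻¹ * (cQ ^ s / 2 ^ m) := by
              rw [← mul_div_assoc, inv_mul_cancel₀ (by positivity)]
          _ ≤ (cQ ^ s)⁻¹ * |Fc q u v a - Fc q u v b| ^ s :=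
              mul_le_mul_of_nonneg_left (h6 ▸ h5) (by positivity)
    have hFinj : Function.Injective (Fc q u v) := by
      intro a b hab
      by_contra hne
      obtain ⟨m, hag, hm⟩ := hsep a b hne
      have := Fc_diff q hq3' u v huv hag hm
      rw [hab, sub_self, abs_zero] at this
      have hpos : 0 < (Q - 2) / ((Q - 1) * Q ^ (m+1)) := by
        apply div_pos (by linarith)
        apply mul_pos (by linarith) (by positivity)
      linarith
    set ψ : ℝ → ℝ := Function.extend (Fc q u v) Gc (fun _ => 0) with hψdef
    have hψ : ∀ a, ψ (Fc q u v a) = Gc a := fun a => hFinj.extend_apply _ _ a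
    set r : ℝ≥0 := ⟨s, hs0.le⟩ with hrdef
    set CC : ℝ≥0 := ⟨(cQ ^ s)⁻¹, by positivity⟩ with hCCdef
    have hr0 : 0 < r := by
      rw [← NNReal.coe_lt_coe]
      exact hs0
    have hH : HolderOnWith CC r ψ (Set.range (Fc q u v)) := by
      rintro x ⟨a, rfl⟩ y ⟨b, rfl⟩
      rw [hψ a, hψ b, edist_dist, edist_dist, Real.dist_eq, Real.dist_eq]
      have hcoe : (CC : ℝ≥0∞) = ENNReal.ofReal ((cQ ^ s)⁻¹) := by
        rw [hCCdef, ENNReal.ofReal, Real.toNNReal_of_nonneg (by positivity)]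
        rfl
      have hcoe2 : (r : ℝ) = s := rfl
      calc ENNReal.ofReal |Gc a - Gc b|
          ≤ ENNReal.ofReal ((cQ ^ s)⁻¹ * |Fc q u v a - Fc q u v b| ^ s) :=
            ENNReal.ofReal_le_ofReal (hkey a b)
        _ = (CC : ℝ≥0∞) * ENNReal.ofReal (|Fc q u v a - Fc q u v b|) ^ (r : ℝ) := by
            rw [ENNReal.ofReal_mul (by positivity), hcoe, hcoe2,
              ENNReal.ofReal_rpow_of_nonneg (abs_nonneg _) hs0.le]
    have himg : Set.Icc (0:ℝ) 1 ⊆ ψ '' Set.range (Fc q u v) := by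
      intro x hx
      obtain ⟨b, hb⟩ := Gc_surj hx
      exact ⟨Fc q u v b, ⟨b, rfl⟩, by rw [hψ b, hb]⟩
    have h1 : (1 : ℝ≥0∞) ≤ dimH (ψ '' Set.range (Fc q u v)) := by
      rw [← dimH_Icc01]
      exact dimH_mono himg
    have h2 := hH.dimH_image_le hr0
    have h3 : (1 : ℝ≥0∞) ≤ dimH (Set.range (Fc q u v)) / r := le_trans h1 h2
    have h4 : (r : ℝ≥0∞) ≤ dimH (Set.range (Fc q u v)) := by
      rw [ENNReal.le_div_iff_mul_le (Or.inl (by exact_mod_cast hr0.ne'))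
        (Or.inl ENNReal.coe_ne_top), one_mul] at h3
      exact h3
    exact lt_of_lt_of_le (by exact_mod_cast hr0) h4

/-- The code fractal `Λ_C ⊆ [0,1]^n ⊆ ℝ^n`: points whose coordinates admit a joint
`q`-ary expansion whose digit vectors form an infinite sequence of codewords of `C`. -/
def Lambda (q n : ℕ) (C : Set (Fin n → Fin q)) : Set (EuclideanSpace ℝ (Fin n)) :=
  {x | ∃ c : ℕ → (Fin n → Fin q), (∀ j, c j ∈ C) ∧
    ∀ i : Fin n, x i = ∑' j : ℕ, (c j i : ℝ) / (q : ℝ) ^ (j + 1)}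

theorem stmt16 (q n : ℕ) (hq : 2 ≤ q) (hn : 1 ≤ n)
    (C : Set (Fin n → Fin q)) (hC : 2 ≤ C.ncard)
    (d : ℕ) (hd : d = sInf {k | ∃ x ∈ C, ∃ y ∈ C, x ≠ y ∧ hammingDist x y = k}) :
    ∃ S : Finset (Fin n), S.card = n - d ∧
      ∃ t : S → ℝ, 0 < dimH (Lambda q n C ∩ {x | ∀ i : S, x i = t i}) := by
  classical
  have hfin : C.Finite := Set.toFinite C
  obtain ⟨x₀, hx₀, y₀, hy₀, hxy, hdist⟩ : ∃ x₀ ∈ C, ∃ y₀ ∈ C, x₀ ≠ y₀ ∧ hammingDist x₀ y₀ = d := by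
    obtain ⟨a, ha, b, hb, hab⟩ := (Set.one_lt_ncard hfin).1 hC
    have hne : {k | ∃ x ∈ C, ∃ y ∈ C, x ≠ y ∧ hammingDist x y = k}.Nonempty :=
      ⟨hammingDist a b, a, ha, b, hb, hab, rfl⟩
    have hmem := Nat.sInf_mem hne
    rw [← hd] at hmem
    exact hmem
  set S : Finset (Fin n) := Finset.univ.filter (fun i => x₀ i = y₀ i) with hSdef
  have hScard : S.card = n - d := by
    have h1 := Finset.card_filter_add_card_filter_not
      (s := (Finset.univ : Finset (Fin n))) (p := fun i => x₀ i = y₀ i)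
    have h2 : (Finset.filter (fun i => ¬ x₀ i = y₀ i) Finset.univ).card = d := by
      rw [← hdist, hammingDist]
    rw [Finset.card_univ, Fintype.card_fin, h2] at h1
    rw [hSdef]
    omega
  refine ⟨S, hScard, fun i => ∑' j : ℕ, ((x₀ i : Fin q) : ℝ) / (q : ℝ) ^ (j + 1), ?_⟩
  obtain ⟨i0, hi0⟩ := Function.ne_iff.1 hxy
  set p : (ℕ → Bool) → EuclideanSpace ℝ (Fin n) := fun a =>
    WithLp.toLp 2 fun i => ∑' j : ℕ, (((bif a j then y₀ else x₀) i : Fin q) : ℝ) / (q : ℝ) ^ (j + 1) with hpdef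
  have hmem : ∀ a : ℕ → Bool, p a ∈ Lambda q n C ∩
      {x | ∀ i : S, x i = ∑' j : ℕ, ((x₀ i : Fin q) : ℝ) / (q : ℝ) ^ (j + 1)} := by
    intro a
    constructor
    · refine ⟨fun j => bif a j then y₀ else x₀, fun j => ?_, fun i => rfl⟩
      show (bif a j then y₀ else x₀) ∈ C
      cases a j
      · exact hx₀
      · exact hy₀
    · intro i
      refine tsum_congr fun j => ?_
      have hiS : x₀ i = y₀ i := (Finset.mem_filter.1 i.2).2
      cases a j
      · rfl
      · rw [show ((bif true then y₀ else x₀) : Fin n → Fin q) = y₀ from rfl, ← hiS]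
  have hsub : Set.range p ⊆ Lambda q n C ∩
      {x | ∀ i : S, x i = ∑' j : ℕ, ((x₀ i : Fin q) : ℝ) / (q : ℝ) ^ (j + 1)} := by
    rintro _ ⟨a, rfl⟩
    exact hmem a
  have hcomp : (⇑(EuclideanSpace.proj (𝕜 := ℝ) i0)) ∘ p = Fc q (x₀ i0) (y₀ i0) := by
    funext a
    show p a i0 = Fc q (x₀ i0) (y₀ i0) a
    refine tsum_congr fun j => ?_
    cases a j <;> rfl
  calc (0 : ℝ≥0∞) < dimH (Set.range (Fc q (x₀ i0) (y₀ i0))) := core q hq _ _ hi0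
    _ = dimH ((⇑(EuclideanSpace.proj (𝕜 := ℝ) i0)) '' Set.range p) := by
        rw [← Set.range_comp, hcomp]
    _ ≤ dimH (Set.range p) := (EuclideanSpace.proj (𝕜 := ℝ) i0).lipschitz.dimH_image_le _
    _ ≤ dimH (Lambda q n C ∩
        {x | ∀ i : S, x i = ∑' j : ℕ, ((x₀ i : Fin q) : ℝ) / (q : ℝ) ^ (j + 1)}) :=
        dimH_mono hsub
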